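/- Consider a deterministic-scan Metropolis-within-Gibbs chain targeting the isotropic Gaussian density π(x) ∝ exp(−‖x − μ‖²/(2σ²)) on ℝ^d, with updates along an orthonormal basis o_0, ..., o_{d−1}. Fix proposal increments z_0,...,z_{K−1} ∈ ℝ (K ≤ d) and uniforms u_0,...,u_{K−1} ∈ [0,1]. Let x_{i+1} = x_i + B(x_i, u_i, o_i z_i)·o_i z_i where B(x,u,ζ) = 1(π(x+ζ)/π(x) ≥ u). Then for every 0 ≤ i < K, B(x_0, u_i, o_i z_i) = B(x_i, u_i, o_i z_i); i.e., the accept/reject decision at step i computed from the initial point x_0 coincides with the one computed from the current state x_i. -/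

import Mathlib

/-- For a deterministic-scan Metropolis-within-Gibbs chain targeting the
isotropic Gaussian density `π(x) ∝ exp(−‖x − μ‖²/(2σ²))` on `ℝ^d`, updating along an orthonormal
family `o 0, …, o (K-1)` (`K ≤ d`), the accept/reject decision at each step `i < K` computed from
the initial point `x 0` coincides with the one computed from the current state `x i`. -/
theorem mwg_isotropic_gaussian_instant_fixed_point
    (d K : ℕ) (hK : K ≤ d) (μ : EuclideanSpace ℝ (Fin d)) (σ : ℝ) (hσ : 0 < σ)
    (π : EuclideanSpace ℝ (Fin d) → ℝ)
    (hπ : ∀ x, π x = Real.exp (-‖x - μ‖ ^ 2 / (2 * σ ^ 2)))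
    (o : ℕ → EuclideanSpace ℝ (Fin d))
    (ho : Orthonormal ℝ (fun i : Fin d => o i))
    (z : ℕ → ℝ) (u : ℕ → ℝ) (hu : ∀ i, u i ∈ Set.Icc (0 : ℝ) 1)
    (x : ℕ → EuclideanSpace ℝ (Fin d))
    (hrec : ∀ i < K,
      x (i + 1) = x i + (if π (x i + z i • o i) ≥ u i * π (x i) then z i • o i else 0)) :
    ∀ i < K, (π (x 0 + z i • o i) ≥ u i * π (x 0) ↔ π (x i + z i • o i) ≥ u i * π (x i)) := by
  intro i hi
  have hiK : i < d := lt_of_lt_of_le hi hK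
  -- the inner product ⟪x j, o i⟫ is constant for j ≤ i
  have key : ∀ j ≤ i, inner ℝ (x j) (o i) = (inner ℝ (x 0) (o i) : ℝ) := by
    intro j hj
    induction j with
    | zero => rfl
    | succ j ih =>
      have hji : j < i := hj
      have hjK : j < K := lt_trans hji hi
      have hne : (⟨j, lt_of_lt_of_le hjK hK⟩ : Fin d) ≠ ⟨i, hiK⟩ := by
        simp [Fin.ext_iff, Nat.ne_of_lt hji]
      have horth : inner ℝ (o j) (o i) = (0 : ℝ) :=
        ho.2 hne
      rw [hrec j hjK]
      split_ifs with h
      · rw [inner_add_left, real_inner_smul_left, horth]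
        simpa using ih (le_of_lt hji)
      · simpa using ih (le_of_lt hji)
  have hx : inner ℝ (x i) (o i) = (inner ℝ (x 0) (o i) : ℝ) := key i le_rfl
  have hno : ‖o i‖ = 1 := ho.1 ⟨i, hiK⟩
  -- the acceptance condition depends on y only through ⟪y, o i⟫
  have hcond : ∀ y : EuclideanSpace ℝ (Fin d),
      (π (y + z i • o i) ≥ u i * π y ↔
       Real.exp (-((z i) ^ 2 + 2 * z i * ((inner ℝ y (o i) : ℝ) - (inner ℝ μ (o i) : ℝ)))
         / (2 * σ ^ 2)) ≥ u i) := by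
    intro y
    rw [hπ, hπ]
    have hnorm : ‖y + z i • o i - μ‖ ^ 2
        = ‖y - μ‖ ^ 2 + ((z i) ^ 2 + 2 * z i * ((inner ℝ y (o i) : ℝ) - (inner ℝ μ (o i) : ℝ))) := by
      have h1 : y + z i • o i - μ = (y - μ) + z i • o i := by abel
      rw [h1, norm_add_sq_real, real_inner_smul_right, inner_sub_left, norm_smul, hno]
      simp [abs_sq]
      ring
    rw [hnorm]
    have hE : Real.exp (-(‖y - μ‖ ^ 2
          + ((z i) ^ 2 + 2 * z i * ((inner ℝ y (o i) : ℝ) - (inner ℝ μ (o i) : ℝ)))) / (2 * σ ^ 2))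
        = Real.exp (-((z i) ^ 2 + 2 * z i * ((inner ℝ y (o i) : ℝ) - (inner ℝ μ (o i) : ℝ)))
            / (2 * σ ^ 2)) * Real.exp (-‖y - μ‖ ^ 2 / (2 * σ ^ 2)) := by
      rw [← Real.exp_add]
      ring_nf
    rw [hE]
    exact mul_le_mul_iff_of_pos_right (Real.exp_pos _)
  rw [hcond (x 0), hcond (x i), hx]
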